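/- Heap Reordering: if H : Ψ has a typing derivation D (a topological ordering of locations), H(ℓ₁) is a free variable cell, ℓ₁ and ℓ₂ are both assigned types by Ψ, and ℓ₁ does not occur in the term rooted at ℓ₂ (the occurs check passes), then there exists another typing derivation D' of H : Ψ in which ℓ₂ appears before ℓ₁, the successors of ℓ₁ in D' are a subset of those in D, and the predecessors of ℓ₂ in D' are a subset of those in D. -/

import Mathlib

/-- Heap values: structures, free variables (annotated with an atomic type),
pointers, tuples, and closures. Locations are natural numbers. -/
inductive HVal where
  | str : ℕ → List ℕ → HVal      -- constructor applied to argument locations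
  | free : ℕ → HVal              -- free variable annotated with its atomic type
  | bound : ℕ → HVal             -- pointer to another location
  | tuple : List ℕ → HVal        -- tuple of word values (locations)
  | close : ℕ → ℕ → HVal         -- closure: environment location and code label

/-- The component locations a heap value refers to. -/
def HVal.components : HVal → List ℕ
  | .str _ ls => ls
  | .free _ => []
  | .bound l => [l]
  | .tuple ls => ls
  | .close w _ => [w]

/-- A heap maps locations to heap values (partially). -/
abbrev Heap := ℕ → Option HVal

/-- Heap update/extension `H[ℓ ↦ v]`. -/
def Heap.update (H : Heap) (l : ℕ) (v : HVal) : Heap :=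
  fun l' => if l' = l then some v else H l'

/-- The heap occurs relation `ℓ₁ ∈_H ℓ₂`: `ℓ₁` occurs in the value rooted at `ℓ₂`
(by reflexivity, by following `bound` pointers, or through a component of a
structure, tuple, or closure). -/
inductive HOccurs (H : Heap) : ℕ → ℕ → Prop where
  | refl : ∀ {l}, HOccurs H l l
  | step : ∀ {l₁ l₂ v l'}, H l₂ = some v → l' ∈ v.components →
      HOccurs H l₁ l' → HOccurs H l₁ l₂

/-- The heap non-occurs relation `ℓ₁ ∉_H ℓ₂`, dual to `HOccurs`:
`ℓ₂` is a cell distinct from `ℓ₁` none of whose components contains `ℓ₁`. -/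
inductive NHOccurs (H : Heap) : ℕ → ℕ → Prop where
  | free : ∀ {l₁ l₂ a}, l₁ ≠ l₂ → H l₂ = some (.free a) → NHOccurs H l₁ l₂
  | step : ∀ {l₁ l₂ v}, l₁ ≠ l₂ → H l₂ = some v →
      (∀ l' ∈ v.components, NHOccurs H l₁ l') → NHOccurs H l₁ l₂

/-- Types of heap cells: Prolog-term (atomic) types, tuple types, and
continuation (closure) types. -/
inductive Ty where
  | atom : ℕ → Ty
  | tup : List Ty → Ty
  | cont : Ty

/-- A signature assigns to each constructor its argument atomic types and its
result atomic type. -/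
abbrev Sig := ℕ → Option (List ℕ × ℕ)

/-- A heap typing derivation is an ordered list of typed locations,
newest first; the heap type `Ψ` it induces looks a location up. -/
abbrev Deriv := List (ℕ × Ty)

/-- The (unordered) heap type `Ψ` induced by a derivation. -/
def psiOf (D : Deriv) : ℕ → Option Ty :=
  fun l => (D.find? (fun p => p.1 = l)).map Prod.snd

/-- Heap value typing `Ψ ⊢ v : τ` relative to a signature. -/
inductive VTy (Sg : Sig) (Ψ : ℕ → Option Ty) : HVal → Ty → Prop where
  | free : ∀ {a}, VTy Sg Ψ (.free a) (.atom a)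
  | bound : ∀ {l a}, Ψ l = some (.atom a) → VTy Sg Ψ (.bound l) (.atom a)
  | str : ∀ {c ls as a}, Sg c = some (as, a) →
      List.Forall₂ (fun l b => Ψ l = some (.atom b)) ls as →
      VTy Sg Ψ (.str c ls) (.atom a)
  | tuple : ∀ {ls τs}, List.Forall₂ (fun l τ => Ψ l = some τ) ls τs →
      VTy Sg Ψ (.tuple ls) (.tup τs)
  | close : ∀ {w lc τ}, Ψ w = some τ → VTy Sg Ψ (.close w lc) .cont

/-- Heap typing derivations `H : Ψ`: locations are typed one at a time and each
value may only refer to previously typed locations, so a derivation is a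
topological ordering witnessing acyclicity of the heap. -/
inductive HeapTy (Sg : Sig) (H : Heap) : Deriv → Prop where
  | nil : HeapTy Sg H []
  | cons : ∀ {D l v τ}, HeapTy Sg H D → H l = some v → VTy Sg (psiOf D) v τ →
      psiOf D l = none → HeapTy Sg H ((l, τ) :: D)

/-- Locations typed strictly before `l` in the derivation `D`
(derivations are newest-first, so predecessors appear after `l` in the list). -/
def predD (D : Deriv) (l : ℕ) : List ℕ :=
  ((D.dropWhile (fun p => p.1 ≠ l)).tail).map Prod.fst

/-- Locations typed strictly after `l` in the derivation `D`. -/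
def succD (D : Deriv) (l : ℕ) : List ℕ :=
  (D.takeWhile (fun p => p.1 ≠ l)).map Prod.fst

/-- `end(H, ℓ)` follows `bound`-pointer chains: `EndsAt H ℓ ℓ'` says the chain
starting at `ℓ` terminates at `ℓ'`, which holds a free variable or structure. -/
inductive EndsAt (H : Heap) : ℕ → ℕ → Prop where
  | free : ∀ {l a}, H l = some (.free a) → EndsAt H l l
  | str : ∀ {l c ls}, H l = some (.str c ls) → EndsAt H l l
  | bound : ∀ {l l' l''}, H l = some (.bound l') → EndsAt H l' l'' → EndsAt H l l''

namespace HeapReorder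

attribute [local instance] Classical.propDecidable

variable {Sg : Sig} {H : Heap}

def keys (D : Deriv) : List ℕ := D.map Prod.fst

lemma keys_append (X Y : Deriv) : keys (X ++ Y) = keys X ++ keys Y := by
  simp [keys]

lemma mem_keys {D : Deriv} {l : ℕ} : l ∈ keys D ↔ ∃ τ, (l, τ) ∈ D := by
  constructor
  · intro h
    obtain ⟨⟨a, b⟩, hm, he⟩ := List.mem_map.mp h
    exact ⟨b, by simpa [← he] using hm⟩
  · rintro ⟨τ, hm⟩
    exact List.mem_map.mpr ⟨(l, τ), hm, rfl⟩

lemma psiOf_eq_none_iff {D : Deriv} {l : ℕ} : psiOf D l = none ↔ l ∉ keys D := by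
  unfold psiOf
  rw [Option.map_eq_none_iff, List.find?_eq_none]
  constructor
  · rintro h hm
    obtain ⟨τ, hm⟩ := mem_keys.mp hm
    exact absurd (by simp : decide ((l, τ).1 = l) = true) (h _ hm)
  · rintro h ⟨a, b⟩ hm hd
    have : a = l := of_decide_eq_true hd
    subst this
    exact h (mem_keys.mpr ⟨b, hm⟩)

lemma psiOf_some_mem {D : Deriv} {l : ℕ} {τ : Ty} (h : psiOf D l = some τ) :
    (l, τ) ∈ D := by
  unfold psiOf at h
  obtain ⟨p, hp, hmap⟩ := Option.map_eq_some_iff.mp h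
  have hm := List.mem_of_find?_eq_some hp
  have ht := List.find?_some hp
  obtain ⟨a, b⟩ := p
  simp at ht hmap
  subst ht; subst hmap; exact hm

lemma mem_psiOf {D : Deriv} (nd : (keys D).Nodup) {l : ℕ} {τ : Ty}
    (h : (l, τ) ∈ D) : psiOf D l = some τ := by
  induction D with
  | nil => simp at h
  | cons p D ih =>
    obtain ⟨l', τ'⟩ := p
    rw [show keys ((l', τ') :: D) = l' :: keys D from rfl, List.nodup_cons] at nd
    rcases List.mem_cons.mp h with h | h
    · cases h; simp [psiOf]
    · have hne : l' ≠ l := by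
        rintro rfl; exact nd.1 (mem_keys.mpr ⟨τ, h⟩)
      have := ih nd.2 h
      simpa [psiOf, List.find?_cons, hne] using this

lemma psiOf_perm {D D' : Deriv} (nd : (keys D).Nodup) (hp : D'.Perm D) :
    psiOf D' = psiOf D := by
  have nd' : (keys D').Nodup := ((hp.map Prod.fst).nodup_iff).mpr nd
  funext l
  cases h : psiOf D l with
  | none =>
    rw [psiOf_eq_none_iff]
    intro hmem
    exact psiOf_eq_none_iff.mp h ((hp.map Prod.fst).mem_iff.mp hmem)
  | some τ => exact mem_psiOf nd' (hp.mem_iff.mpr (psiOf_some_mem h))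

lemma heapTy_nodup {D : Deriv} (h : HeapTy Sg H D) : (keys D).Nodup := by
  induction h with
  | nil => simp [keys]
  | @cons D l v τ _ _ _ hnone ih =>
    rw [show keys ((l, τ) :: D) = l :: keys D from rfl, List.nodup_cons]
    exact ⟨psiOf_eq_none_iff.mp hnone, ih⟩

end HeapReorder
namespace HeapReorder

attribute [local instance] Classical.propDecidable

variable {Sg : Sig} {H : Heap}

lemma forall₂_mono_mem {α β : Type} {R S : α → β → Prop} {ls : List α} {bs : List β}
    (h : List.Forall₂ R ls bs) (hm : ∀ a ∈ ls, ∀ b, R a b → S a b) :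
    List.Forall₂ S ls bs := by
  induction h with
  | nil => exact .nil
  | cons hr _ ih =>
    exact .cons (hm _ List.mem_cons_self _ hr)
      (ih fun a ha b => hm a (List.mem_cons_of_mem _ ha) b)

lemma vty_mono_components {Ψ Ψ' : ℕ → Option Ty} {v : HVal} {τ : Ty}
    (h : VTy Sg Ψ v τ)
    (hm : ∀ l ∈ v.components, ∀ t, Ψ l = some t → Ψ' l = some t) :
    VTy Sg Ψ' v τ := by
  cases h with
  | free => exact .free
  | bound hb => exact .bound (hm _ (by simp [HVal.components]) _ hb)
  | str hs hf =>
    exact .str hs (forall₂_mono_mem hf fun a ha b hr =>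
      hm a (by simpa [HVal.components] using ha) _ hr)
  | tuple hf =>
    exact .tuple (forall₂_mono_mem hf fun a ha b hr =>
      hm a (by simpa [HVal.components] using ha) _ hr)
  | close hc => exact .close (hm _ (by simp [HVal.components]) _ hc)

lemma vty_mono {Ψ Ψ' : ℕ → Option Ty} {v : HVal} {τ : Ty}
    (h : VTy Sg Ψ v τ) (hm : ∀ l t, Ψ l = some t → Ψ' l = some t) :
    VTy Sg Ψ' v τ :=
  vty_mono_components h fun l _ => hm l

lemma nh_not_h {l₁ l₂ : ℕ} (h : NHOccurs H l₁ l₂) : ¬ HOccurs H l₁ l₂ := by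
  induction h with
  | free hne hf =>
    intro hc
    cases hc with
    | refl => exact hne rfl
    | step hv hm _ =>
      rw [hf] at hv
      cases hv
      simp [HVal.components] at hm
  | step hne hv hcomp ih =>
    intro hc
    cases hc with
    | refl => exact hne rfl
    | step hv' hm hocc =>
      rw [hv] at hv'
      cases hv'
      exact ih _ hm hocc

lemma psiOf_append_none {X Y : Deriv} {l : ℕ} :
    psiOf (X ++ Y) l = none ↔ psiOf X l = none ∧ psiOf Y l = none := by
  simp [psiOf_eq_none_iff, keys_append, not_or]

lemma heapTy_insert {l : ℕ} {v : HVal} {τ : Ty} :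
    ∀ (X : Deriv) {Y : Deriv}, HeapTy Sg H (X ++ Y) → H l = some v →
    VTy Sg (psiOf Y) v τ → psiOf (X ++ Y) l = none →
    HeapTy Sg H (X ++ (l, τ) :: Y) := by
  intro X
  induction X with
  | nil =>
    intro Y hty hv hvt hnone
    exact HeapTy.cons hty hv hvt (by simpa using hnone)
  | cons q X' ih =>
    intro Y hty hv hvt hnone
    obtain ⟨l', τ'⟩ := q
    rw [List.cons_append] at hty
    cases hty with
    | cons hD hv' hvt' hnone' =>
      rw [psiOf_append_none] at hnone
      have hlX : psiOf X' l = none ∧ psiOf Y l = none := by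
        have h1 := hnone.1
        rw [psiOf_eq_none_iff] at h1
        constructor
        · rw [psiOf_eq_none_iff]
          intro hm; exact h1 (by simpa [keys] using Or.inr (by simpa [keys] using hm))
        · exact hnone.2
      have hnone'' : psiOf (X' ++ Y) l = none := psiOf_append_none.mpr hlX
      have ihres := ih hD hv hvt hnone''
      have ndnew : (keys (X' ++ (l, τ) :: Y)).Nodup := by
        rw [show keys (X' ++ (l, τ) :: Y) = keys X' ++ l :: keys Y by simp [keys]]
        rw [List.nodup_middle]
        exact List.nodup_cons.mpr ⟨by
          rw [← keys_append, ← psiOf_eq_none_iff]; exact hnone'', by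
          rw [← keys_append]; exact heapTy_nodup hD⟩
      have hmono : ∀ l'' t, psiOf (X' ++ Y) l'' = some t →
          psiOf (X' ++ (l, τ) :: Y) l'' = some t := by
        intro l'' t hs
        have hmem := psiOf_some_mem hs
        apply mem_psiOf ndnew
        rcases List.mem_append.mp hmem with h | h
        · exact List.mem_append.mpr (Or.inl h)
        · exact List.mem_append.mpr (Or.inr (List.mem_cons_of_mem _ h))
      refine HeapTy.cons ihres hv' (vty_mono hvt' hmono) ?_
      rw [psiOf_eq_none_iff] at hnone' ⊢
      have hne : l' ≠ l := by
        rintro rfl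
        exact absurd (by simp [keys] : l' ∈ keys ((l', τ') :: X' ++ Y))
          (psiOf_eq_none_iff.mp (psiOf_append_none.mpr hnone))
      intro hmem
      simp only [keys, List.append_eq, List.map_append, List.map_cons, List.mem_append,
        List.mem_cons] at hmem hnone'
      rcases hmem with h | h | h
      · exact hnone' (Or.inl h)
      · exact hne h
      · exact hnone' (Or.inr h)

lemma dropWhile_append_cons {α : Type} (p : α → Bool) {A : List α} {m : α}
    {B : List α} (hA : ∀ x ∈ A, p x = true) (hm : p m = false) :
    (A ++ m :: B).dropWhile p = m :: B := by
  induction A with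
  | nil => simp [List.dropWhile_cons, hm]
  | cons a A ih =>
    simp only [List.cons_append, List.dropWhile_cons, hA a (by simp)]
    exact ih (fun x hx => hA x (by simp [hx]))

lemma takeWhile_append_cons {α : Type} (p : α → Bool) {A : List α} {m : α}
    {B : List α} (hA : ∀ x ∈ A, p x = true) (hm : p m = false) :
    (A ++ m :: B).takeWhile p = A := by
  induction A with
  | nil => simp [List.takeWhile_cons, hm]
  | cons a A ih =>
    simp only [List.cons_append, List.takeWhile_cons, hA a (by simp)]
    simp [ih (fun x hx => hA x (by simp [hx]))]

lemma predD_eq {X Y : Deriv} {l : ℕ} {τ : Ty} (h : l ∉ keys X) :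
    predD (X ++ (l, τ) :: Y) l = keys Y := by
  unfold predD
  rw [dropWhile_append_cons]
  · simp [keys]
  · intro x hx
    simp only [decide_eq_true_eq]
    rintro rfl
    exact h (mem_keys.mpr ⟨x.2, by simpa using hx⟩)
  · simp

lemma succD_eq {X Y : Deriv} {l : ℕ} {τ : Ty} (h : l ∉ keys X) :
    succD (X ++ (l, τ) :: Y) l = keys X := by
  unfold succD
  rw [takeWhile_append_cons]
  · simp [keys]
  · intro x hx
    simp only [decide_eq_true_eq]
    rintro rfl
    exact h (mem_keys.mpr ⟨x.2, by simpa using hx⟩)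
  · simp

end HeapReorder
namespace HeapReorder

attribute [local instance] Classical.propDecidable

variable {Sg : Sig} {H : Heap}

noncomputable def dB (H : Heap) (l₁ : ℕ) : ℕ × Ty → Bool :=
  fun p => decide (HOccurs H l₁ p.1)

lemma part_perm (H : Heap) (l₁ : ℕ) (X : Deriv) (m : ℕ × Ty) (B : Deriv) :
    (X.filter (dB H l₁) ++ m :: (X.filter (fun q => !dB H l₁ q) ++ B)).Perm
      (X ++ m :: B) := by
  refine (List.Perm.append_left _ List.perm_middle.symm).trans ?_
  rw [← List.append_assoc]
  exact (List.filter_append_perm _ X).append_right _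

lemma rebuild {l₁ : ℕ} {τ₁ : Ty} {B : Deriv} :
    ∀ (X : Deriv), HeapTy Sg H (X ++ (l₁, τ₁) :: B) →
    HeapTy Sg H (X.filter (dB H l₁) ++ (l₁, τ₁) ::
      (X.filter (fun q => !dB H l₁ q) ++ B)) := by
  intro X
  induction X with
  | nil => intro h; simpa using h
  | cons q X' ih =>
    intro hty
    obtain ⟨l, τ⟩ := q
    rw [List.cons_append] at hty
    cases hty with
    | @cons _ _ v _ hD hv hvt hnone =>
      have ihres := ih hD
      have ndD := heapTy_nodup hD
      have hperm := part_perm H l₁ X' (l₁, τ₁) B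
      have hpsi := psiOf_perm ndD hperm
      by_cases hd : HOccurs H l₁ l
      · have hf1 : ((l, τ) :: X').filter (dB H l₁)
            = (l, τ) :: X'.filter (dB H l₁) := by simp [dB, hd]
        have hf2 : ((l, τ) :: X').filter (fun q => !dB H l₁ q)
            = X'.filter (fun q => !dB H l₁ q) := by simp [dB, hd]
        rw [hf1, hf2, List.cons_append]
        exact HeapTy.cons ihres hv (by rw [hpsi]; exact hvt)
          (by rw [hpsi]; exact hnone)
      · have hf1 : ((l, τ) :: X').filter (dB H l₁)
            = X'.filter (dB H l₁) := by simp [dB, hd]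
        have hf2 : ((l, τ) :: X').filter (fun q => !dB H l₁ q)
            = (l, τ) :: X'.filter (fun q => !dB H l₁ q) := by simp [dB, hd]
        rw [hf1, hf2]
        have hcc : ∀ l' ∈ v.components, ¬ HOccurs H l₁ l' :=
          fun l' hm hc => hd (HOccurs.step hv hm hc)
        have ndc : (keys (X'.filter (fun q => !dB H l₁ q) ++ B)).Nodup := by
          have hsub : (X'.filter (fun q => !dB H l₁ q) ++ B).Sublist
              (X' ++ (l₁, τ₁) :: B) :=
            List.Sublist.append List.filter_sublist (List.sublist_cons_self _ _)
          exact List.Nodup.sublist (hsub.map Prod.fst) ndD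
        have hvt' : VTy Sg (psiOf (X'.filter (fun q => !dB H l₁ q) ++ B)) v τ := by
          apply vty_mono_components hvt
          intro l' hmemc t hsome
          have hm := psiOf_some_mem hsome
          apply mem_psiOf ndc
          rcases List.mem_append.mp hm with h | h
          · refine List.mem_append.mpr (Or.inl (List.mem_filter.mpr ⟨h, ?_⟩))
            simp only [dB, Bool.not_eq_true', decide_eq_false_iff_not]
            exact hcc l' hmemc
          · rcases List.mem_cons.mp h with h | h
            · exfalso
              cases h
              exact hcc _ hmemc HOccurs.refl
            · exact List.mem_append.mpr (Or.inr h)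
        have heq : (X'.filter (dB H l₁) ++ [(l₁, τ₁)]) ++
            (X'.filter (fun q => !dB H l₁ q) ++ B)
            = X'.filter (dB H l₁) ++ (l₁, τ₁) ::
              (X'.filter (fun q => !dB H l₁ q) ++ B) := by simp
        have hins := heapTy_insert (X'.filter (dB H l₁) ++ [(l₁, τ₁)])
          (Y := X'.filter (fun q => !dB H l₁ q) ++ B)
          (by rw [heq]; exact ihres) hv hvt'
          (by rw [heq, hpsi]; exact hnone)
        have heq2 : (X'.filter (dB H l₁) ++ [(l₁, τ₁)]) ++
            (l, τ) :: (X'.filter (fun q => !dB H l₁ q) ++ B)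
            = X'.filter (dB H l₁) ++ (l₁, τ₁) ::
              ((l, τ) :: X'.filter (fun q => !dB H l₁ q) ++ B) := by simp
        rwa [heq2] at hins

end HeapReorder

namespace HeapReorder

lemma keys_filter_subset {p : ℕ × Ty → Bool} {A : Deriv} {l : ℕ}
    (h : l ∈ keys (A.filter p)) : l ∈ keys A := by
  obtain ⟨τ, hm⟩ := mem_keys.mp h
  exact mem_keys.mpr ⟨τ, (List.mem_filter.mp hm).1⟩

end HeapReorder
open HeapReorder

/-- Heap Reordering: if `H : Ψ` via derivation `D`, `H(ℓ₁)` is a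
free variable, `ℓ₁` and `ℓ₂` are typed by `Ψ`, and the occurs check
`ℓ₁ ∉_H ℓ₂` passes, then there is another derivation `D'` of `H : Ψ` in which
`ℓ₂` is typed before `ℓ₁`, the successors of `ℓ₁` shrink, and the predecessors
of `ℓ₂` shrink. -/
theorem heap_reordering {Sg : Sig} {H : Heap} {D : Deriv}
    (hty : HeapTy Sg H D) {l₁ l₂ a : ℕ}
    (hfree : H l₁ = some (.free a))
    (h1 : (psiOf D l₁).isSome) (h2 : (psiOf D l₂).isSome)
    (hocc : NHOccurs H l₁ l₂) :
    ∃ D', HeapTy Sg H D' ∧ (∀ l, psiOf D' l = psiOf D l) ∧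
      l₂ ∈ predD D' l₁ ∧
      (∀ l ∈ succD D' l₁, l ∈ succD D l₁) ∧
      (∀ l ∈ predD D' l₂, l ∈ predD D l₂) := by
  classical
  have hne : l₁ ≠ l₂ := by
    cases hocc with
    | free h _ => exact h
    | step h _ _ => exact h
  have hnocc : ¬ HOccurs H l₁ l₂ := nh_not_h hocc
  obtain ⟨τ₁, h1'⟩ := Option.isSome_iff_exists.mp h1
  obtain ⟨τ₂, h2'⟩ := Option.isSome_iff_exists.mp h2
  have hm1 := psiOf_some_mem h1'
  have hm2 := psiOf_some_mem h2'
  obtain ⟨A, B, rfl⟩ := List.append_of_mem hm1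
  have nd := heapTy_nodup hty
  have ndk : (keys A ++ l₁ :: keys B).Nodup := by
    simpa [keys] using nd
  rw [List.nodup_append] at ndk
  obtain ⟨ndA, ndB', hdisj⟩ := ndk
  have hl1A : l₁ ∉ keys A := fun h =>
    hdisj _ h _ List.mem_cons_self rfl
  by_cases hc : l₂ ∈ keys B
  · exact ⟨A ++ (l₁, τ₁) :: B, hty, fun l => rfl,
      by rw [predD_eq hl1A]; exact hc, fun l h => h, fun l h => h⟩
  · have hA : (l₂, τ₂) ∈ A := by
      rcases List.mem_append.mp hm2 with h | h
      · exact h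
      · rcases List.mem_cons.mp h with h | h
        · injection h with h1 _
          exact absurd h1.symm hne
        · exact absurd (mem_keys.mpr ⟨τ₂, h⟩) hc
    have hperm := part_perm H l₁ A (l₁, τ₁) B
    have hpsi := psiOf_perm nd hperm
    have hl1fd : l₁ ∉ keys (A.filter (dB H l₁)) :=
      fun h => hl1A (keys_filter_subset h)
    refine ⟨A.filter (dB H l₁) ++ (l₁, τ₁) ::
        (A.filter (fun q => !dB H l₁ q) ++ B),
      rebuild A hty, fun l => congrFun hpsi l, ?_, ?_, ?_⟩
    · rw [predD_eq hl1fd, keys_append]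
      refine List.mem_append.mpr (Or.inl ?_)
      refine mem_keys.mpr ⟨τ₂, List.mem_filter.mpr ⟨hA, ?_⟩⟩
      simp only [dB, Bool.not_eq_true', decide_eq_false_iff_not]
      exact hnocc
    · rw [succD_eq hl1fd, succD_eq hl1A]
      exact fun l h => keys_filter_subset h
    · obtain ⟨A₁, A₂, rfl⟩ := List.append_of_mem hA
      have ndA' : (keys A₁ ++ l₂ :: keys A₂).Nodup := by
        simpa [keys] using ndA
      rw [List.nodup_append] at ndA'
      obtain ⟨ndA₁, ndA₂', hdisjA⟩ := ndA'
      have hl2A₁ : l₂ ∉ keys A₁ := fun h =>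
        hdisjA _ h _ List.mem_cons_self rfl
      have hl2A₂ : l₂ ∉ keys A₂ := (List.nodup_cons.mp ndA₂').1
      have hfd : (A₁ ++ (l₂, τ₂) :: A₂).filter (dB H l₁)
          = A₁.filter (dB H l₁) ++ A₂.filter (dB H l₁) := by
        simp [List.filter_append, dB, hnocc]
      have hfc : (A₁ ++ (l₂, τ₂) :: A₂).filter (fun q => !dB H l₁ q)
          = A₁.filter (fun q => !dB H l₁ q) ++ (l₂, τ₂) ::
            A₂.filter (fun q => !dB H l₁ q) := by
        simp [List.filter_append, dB, hnocc]
      have heqD' : (A₁ ++ (l₂, τ₂) :: A₂).filter (dB H l₁) ++ (l₁, τ₁) ::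
          ((A₁ ++ (l₂, τ₂) :: A₂).filter (fun q => !dB H l₁ q) ++ B)
          = ((A₁.filter (dB H l₁) ++ A₂.filter (dB H l₁)) ++ (l₁, τ₁) ::
            A₁.filter (fun q => !dB H l₁ q)) ++ (l₂, τ₂) ::
            (A₂.filter (fun q => !dB H l₁ q) ++ B) := by
        rw [hfd, hfc]; simp
      have hpre : l₂ ∉ keys ((A₁.filter (dB H l₁) ++ A₂.filter (dB H l₁))
          ++ (l₁, τ₁) :: A₁.filter (fun q => !dB H l₁ q)) := by
        intro h
        simp only [keys_append, List.mem_append] at h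
        rcases h with (h | h) | h
        · exact hl2A₁ (keys_filter_subset h)
        · exact hl2A₂ (keys_filter_subset h)
        · have h' : l₂ ∈ l₁ :: keys (A₁.filter (fun q => !dB H l₁ q)) := h
          rcases List.mem_cons.mp h' with h | h
          · exact hne h.symm
          · exact hl2A₁ (keys_filter_subset h)
      have heqD : (A₁ ++ (l₂, τ₂) :: A₂) ++ (l₁, τ₁) :: B
          = A₁ ++ (l₂, τ₂) :: (A₂ ++ (l₁, τ₁) :: B) := by simp
      rw [heqD', heqD, predD_eq hpre, predD_eq hl2A₁]
      intro l h
      rw [keys_append] at h ⊢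
      rcases List.mem_append.mp h with h | h
      · exact List.mem_append.mpr (Or.inl (keys_filter_subset h))
      · refine List.mem_append.mpr (Or.inr ?_)
        simp only [keys, List.map_cons, List.mem_cons]
        exact Or.inr (by simpa [keys] using h)
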